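/- Let p ∈ (0,1), let n be a positive integer, and let (ξ_i)_{i≥1} be i.i.d. random variables with the Binomial(n,p) distribution. Set S_0 = 1 and S_t = 1 + Σ_{i=1}^{t}(ξ_i − 1), fix an integer H > 0, and let γ = min{t ≥ 1 : S_t ≥ H or S_t = 0}. Let Ξ be a set of positive integers such that the event {S_γ ≥ H and γ ∈ Ξ} has positive probability. Then the conditional distribution of the overshoot S_γ − H given {S_γ ≥ H, γ ∈ Ξ} is stochastically dominated by the Binomial(n,p) distribution; that is, for every integer k ≥ 0, P(S_γ − H ≥ k | S_γ ≥ H, γ ∈ Ξ) ≤ P(X ≥ k), where X is a Binomial(n,p) random variable. -/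

import Mathlib

open MeasureTheory ProbabilityTheory
open scoped ENNReal

/-- The Binomial(n,p) distribution, as a measure on `ℕ`. -/
noncomputable def binomialMeasure (n : ℕ) (p : ℝ) : Measure ℕ :=
  Measure.sum fun k : ℕ =>
    (ENNReal.ofReal ((n.choose k : ℝ) * p ^ k * (1 - p) ^ (n - k))) • Measure.dirac k

/-- The random walk `S_t = 1 + ∑_{i=1}^t (ξ_i - 1)`. -/
def walk {Ω : Type*} (ξ : ℕ → Ω → ℕ) (t : ℕ) (ω : Ω) : ℤ :=
  1 + ∑ i ∈ Finset.Icc 1 t, ((ξ i ω : ℤ) - 1)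

/-- The stopping time `γ = min {t ≥ 1 : S_t ≥ H or S_t = 0}`. -/
noncomputable def hitTime {Ω : Type*} (ξ : ℕ → Ω → ℕ) (H : ℕ) (ω : Ω) : ℕ :=
  sInf {t | 1 ≤ t ∧ ((H : ℤ) ≤ walk ξ t ω ∨ walk ξ t ω = 0)}

set_option linter.unusedSectionVars false

noncomputable def binTail (p : ℝ) (n k : ℕ) : ℝ :=
  ∑ i ∈ Finset.Ico k (n+1), (n.choose i : ℝ) * p ^ i * (1 - p) ^ (n - i)

lemma binTail_nonneg {p : ℝ} (hp0 : 0 ≤ p) (hp1 : p ≤ 1) (n k : ℕ) :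
    0 ≤ binTail p n k := by
  apply Finset.sum_nonneg
  intro i _
  have : (0:ℝ) ≤ 1 - p := by linarith
  positivity

lemma binTail_zero {p : ℝ} (n : ℕ) : binTail p n 0 = 1 := by
  have h : binTail p n 0 = (p + (1-p))^n := by
    rw [add_pow, binTail, ← Finset.range_eq_Ico]
    apply Finset.sum_congr rfl
    intro i _
    ring
  rw [h]
  norm_num

lemma binTail_shift (f : ℕ → ℝ) (a b : ℕ) :
    ∑ i ∈ Finset.Ico (a+1) (b+1), f i = ∑ i ∈ Finset.Ico a b, f (i+1) := by
  rw [Finset.sum_Ico_eq_sum_range, Finset.sum_Ico_eq_sum_range]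
  rw [Nat.succ_sub_succ]
  apply Finset.sum_congr rfl
  intro i _
  congr 1
  omega

lemma binTail_succ_succ {p : ℝ} (n k : ℕ) :
    binTail p (n+1) (k+1) = p * binTail p n k + (1-p) * binTail p n (k+1) := by
  by_cases hk : k ≤ n
  · have hrw : binTail p (n+1) (k+1)
        = ∑ i ∈ Finset.Ico k (n+1),
            ((n.choose i : ℝ) + (n.choose (i+1) : ℝ)) * p ^ (i+1) * (1-p) ^ (n-i) := by
      rw [binTail, binTail_shift]
      apply Finset.sum_congr rfl
      intro i _
      rw [Nat.succ_sub_succ]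
      rw [Nat.choose_succ_succ]
      push_cast
      ring
    rw [hrw]
    have hsplit : ∀ i ∈ Finset.Ico k (n+1),
        ((n.choose i : ℝ) + (n.choose (i+1) : ℝ)) * p ^ (i+1) * (1-p) ^ (n-i)
        = p * ((n.choose i : ℝ) * p ^ i * (1-p) ^ (n-i))
          + (n.choose (i+1) : ℝ) * p ^ (i+1) * (1-p) ^ (n-i) := by
      intro i _; ring
    rw [Finset.sum_congr rfl hsplit, Finset.sum_add_distrib, ← Finset.mul_sum]
    have e1 : ∑ i ∈ Finset.Ico k (n+1), (n.choose i : ℝ) * p ^ i * (1-p) ^ (n-i)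
        = binTail p n k := rfl
    rw [e1]
    congr 1
    -- second sum equals (1-p) * binTail p n (k+1)
    · have h2 : ∑ i ∈ Finset.Ico k (n+1), (n.choose (i+1) : ℝ) * p ^ (i+1) * (1-p) ^ (n-i)
          = ∑ j ∈ Finset.Ico (k+1) (n+2), (n.choose j : ℝ) * p ^ j * (1-p) ^ (n+1-j) := by
        rw [binTail_shift (fun j => (n.choose j : ℝ) * p ^ j * (1-p) ^ (n+1-j))]
        apply Finset.sum_congr rfl
        intro i _
        rw [Nat.succ_sub_succ]
      rw [h2, Finset.sum_Ico_succ_top (by omega : k+1 ≤ n+1)]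
      rw [Nat.choose_succ_self]
      simp only [Nat.cast_zero, zero_mul]
      rw [add_zero, binTail, Finset.mul_sum]
      apply Finset.sum_congr rfl
      intro j hj
      rw [Finset.mem_Ico] at hj
      have hnj : n + 1 - j = (n - j) + 1 := by omega
      rw [hnj, pow_succ]
      ring
  · have h1 : Finset.Ico (k+1) (n+1+1) = ∅ := by
      apply Finset.Ico_eq_empty; omega
    have h2 : Finset.Ico k (n+1) = ∅ := by
      apply Finset.Ico_eq_empty; omega
    have h3 : Finset.Ico (k+1) (n+1) = ∅ := by
      apply Finset.Ico_eq_empty; omega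
    simp [binTail, h1, h2, h3]

lemma binTail_anti {p : ℝ} (hp0 : 0 ≤ p) (hp1 : p ≤ 1) (n : ℕ) {k k' : ℕ} (h : k ≤ k') :
    binTail p n k' ≤ binTail p n k := by
  apply Finset.sum_le_sum_of_subset_of_nonneg
  · apply Finset.Ico_subset_Ico_left h
  · intro i _ _
    have : (0:ℝ) ≤ 1 - p := by linarith
    positivity

lemma binTail_le_one {p : ℝ} (hp0 : 0 ≤ p) (hp1 : p ≤ 1) (n k : ℕ) :
    binTail p n k ≤ 1 := by
  calc binTail p n k ≤ binTail p n 0 := binTail_anti hp0 hp1 n (Nat.zero_le k)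
  _ = 1 := binTail_zero n

lemma binTail_mono_n {p : ℝ} (hp0 : 0 ≤ p) (hp1 : p ≤ 1) (n k : ℕ) :
    binTail p n k ≤ binTail p (n+1) k := by
  cases k with
  | zero => rw [binTail_zero, binTail_zero]
  | succ k =>
    rw [binTail_succ_succ]
    have h1 : binTail p n (k+1) ≤ binTail p n k := binTail_anti hp0 hp1 n (by omega)
    nlinarith [binTail_nonneg hp0 hp1 n (k+1)]

lemma binTail_nbu {p : ℝ} (hp0 : 0 ≤ p) (hp1 : p ≤ 1) (n a b : ℕ) :
    binTail p n (a + b) ≤ binTail p n a * binTail p n b := by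
  induction n generalizing a b with
  | zero =>
    cases a with
    | zero => simp [binTail_zero]
    | succ a =>
      have h1 : binTail p 0 (a + 1 + b) = 0 := by
        rw [binTail]
        rw [Finset.Ico_eq_empty (by omega)]
        simp
      rw [h1]
      apply mul_nonneg (binTail_nonneg hp0 hp1 _ _) (binTail_nonneg hp0 hp1 _ _)
  | succ n ih =>
    cases a with
    | zero => simp [binTail_zero]
    | succ a =>
      cases b with
      | zero => simp [binTail_zero]
      | succ b =>
        have key : binTail p (n+1) (a + 1 + (b+1)) = binTail p (n+1) ((a + (b+1)) + 1) := by
          congr 1; omega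
        rw [key, binTail_succ_succ]
        have h1 : binTail p n (a + (b+1)) ≤ binTail p n a * binTail p n (b+1) := ih a (b+1)
        have h2 : binTail p n (a + (b+1) + 1) ≤ binTail p n (a+1) * binTail p n (b+1) := by
          have : a + (b+1) + 1 = (a+1) + (b+1) := by omega
          rw [this]; exact ih (a+1) (b+1)
        have hq : (0:ℝ) ≤ 1 - p := by linarith
        calc p * binTail p n (a + (b+1)) + (1-p) * binTail p n (a + (b+1) + 1)
            ≤ p * (binTail p n a * binTail p n (b+1))
              + (1-p) * (binTail p n (a+1) * binTail p n (b+1)) := by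
              apply add_le_add
              · exact mul_le_mul_of_nonneg_left h1 hp0
              · exact mul_le_mul_of_nonneg_left h2 hq
          _ = (p * binTail p n a + (1-p) * binTail p n (a+1)) * binTail p n (b+1) := by ring
          _ = binTail p (n+1) (a+1) * binTail p n (b+1) := by rw [binTail_succ_succ]
          _ ≤ binTail p (n+1) (a+1) * binTail p (n+1) (b+1) := by
              exact mul_le_mul_of_nonneg_left (binTail_mono_n hp0 hp1 n (b+1))
                (binTail_nonneg hp0 hp1 (n+1) (a+1))

/-- the walk determined by a (finitely supported) history -/
def histWalk (h : ℕ →₀ ℕ) (u : ℕ) : ℤ := 1 + ∑ i ∈ Finset.Icc 1 u, ((h i : ℤ) - 1)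

/-- admissible histories -/
def OvOk (Ξ : Set ℕ) (H : ℕ) (t : ℕ) (h : ℕ →₀ ℕ) : Prop :=
  t ∈ Ξ ∧ 1 ≤ t ∧ (∀ i, i ∉ Finset.Icc 1 (t-1) → h i = 0) ∧
    ∀ u, 1 ≤ u → u ≤ t - 1 → 0 < histWalk h u ∧ histWalk h u < H

/-- threshold value for the last step -/
def ovM (H t : ℕ) (h : ℕ →₀ ℕ) : ℕ := ((H:ℤ) + 1 - histWalk h (t-1)).toNat

def piece {Ω : Type*} (ξ : ℕ → Ω → ℕ) (Ξ : Set ℕ) (H k : ℕ) (i : ℕ × (ℕ →₀ ℕ)) : Set Ω :=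
  {ω | OvOk Ξ H i.1 i.2 ∧ (∀ j ∈ Finset.Icc 1 (i.1 - 1), ξ j ω = i.2 j)
        ∧ ovM H i.1 i.2 + k ≤ ξ i.1 ω}

section walklemmas
variable {Ω : Type*} (ξ : ℕ → Ω → ℕ)

lemma walk_zero (ω : Ω) : walk ξ 0 ω = 1 := by simp [walk]

lemma walk_succ (u : ℕ) (ω : Ω) :
    walk ξ (u+1) ω = walk ξ u ω + ((ξ (u+1) ω : ℤ) - 1) := by
  rw [walk, walk, Finset.sum_Icc_succ_top (by omega : 1 ≤ u + 1)]
  ring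

lemma walk_agree {t : ℕ} {h : ℕ →₀ ℕ} {ω : Ω}
    (hpre : ∀ j ∈ Finset.Icc 1 (t-1), ξ j ω = h j) {u : ℕ} (hu : u ≤ t - 1) :
    walk ξ u ω = histWalk h u := by
  rw [walk, histWalk]
  congr 1
  apply Finset.sum_congr rfl
  intro i hi
  rw [Finset.mem_Icc] at hi
  rw [hpre i (Finset.mem_Icc.mpr ⟨hi.1, le_trans hi.2 hu⟩)]

lemma hitTime_eq {H t : ℕ} {ω : Ω} (ht1 : 1 ≤ t)
    (hmid : ∀ u, 1 ≤ u → u ≤ t - 1 → 0 < walk ξ u ω ∧ walk ξ u ω < H)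
    (hend : (H : ℤ) ≤ walk ξ t ω) : hitTime ξ H ω = t := by
  have htS : t ∈ {t | 1 ≤ t ∧ ((H : ℤ) ≤ walk ξ t ω ∨ walk ξ t ω = 0)} :=
    ⟨ht1, Or.inl hend⟩
  apply le_antisymm (Nat.sInf_le htS)
  by_contra hlt
  push_neg at hlt
  have hmem := Nat.sInf_mem ⟨t, htS⟩
  set s := sInf {t | 1 ≤ t ∧ ((H : ℤ) ≤ walk ξ t ω ∨ walk ξ t ω = 0)} with hs
  obtain ⟨h1, h2⟩ := hmem
  have hmm := hmid s h1 (by omega)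
  rcases h2 with h2 | h2 <;> omega

/-- On a piece, the hitting time equals `t` and the walk exceeds `H + k`. -/
lemma piece_spec {Ξ : Set ℕ} {H k : ℕ} (hH : 0 < H) {i : ℕ × (ℕ →₀ ℕ)} {ω : Ω}
    (hω : ω ∈ piece ξ Ξ H k i) :
    hitTime ξ H ω = i.1 ∧ (H : ℤ) + k ≤ walk ξ i.1 ω ∧ i.1 ∈ Ξ := by
  obtain ⟨t, h⟩ := i
  dsimp only at hω ⊢
  obtain ⟨⟨htΞ, ht1, hout, hmidh⟩, hpre, hge⟩ := hω
  have hmid : ∀ u, 1 ≤ u → u ≤ t - 1 → 0 < walk ξ u ω ∧ walk ξ u ω < H := by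
    intro u h1 h2
    rw [walk_agree ξ hpre h2]
    exact hmidh u h1 h2
  have hw_le : histWalk h (t-1) ≤ H := by
    rcases Nat.eq_or_lt_of_le ht1 with h' | h'
    · have : t - 1 = 0 := by omega
      rw [this]
      simp only [histWalk, Finset.Icc_eq_empty (by omega : ¬ (1:ℕ) ≤ 0), Finset.sum_empty,
        add_zero]
      exact_mod_cast hH
    · exact le_of_lt (hmidh (t-1) (by omega) le_rfl).2
  have hmZ : (ovM H t h : ℤ) = (H:ℤ) + 1 - histWalk h (t-1) := by
    rw [ovM, Int.toNat_of_nonneg (by omega)]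
  have hwt : walk ξ t ω = histWalk h (t-1) + ((ξ t ω : ℤ) - 1) := by
    have ht : t - 1 + 1 = t := by omega
    rw [← ht, walk_succ, walk_agree ξ hpre le_rfl, ht]
  have hgeZ : ((ovM H t h : ℤ) + k) ≤ (ξ t ω : ℤ) := by exact_mod_cast hge
  have hend : (H : ℤ) + k ≤ walk ξ t ω := by
    rw [hwt]; omega
  exact ⟨hitTime_eq ξ ht1 hmid (by
    have : (0:ℤ) ≤ k := Int.natCast_nonneg k
    omega), hend, htΞ⟩

/-- Any point of the event with overshoot `≥ k` lies in some piece. -/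
lemma mem_piece {Ξ : Set ℕ} {H k : ℕ} (hH : 0 < H) (hΞ : ∀ t ∈ Ξ, 0 < t) {ω : Ω}
    (hΞω : hitTime ξ H ω ∈ Ξ)
    (hk : (H : ℤ) + k ≤ walk ξ (hitTime ξ H ω) ω) :
    ∃ i, ω ∈ piece ξ Ξ H k i := by
  set t := hitTime ξ H ω with htdef
  have ht0 : 0 < t := hΞ _ hΞω
  set S := {t' | 1 ≤ t' ∧ ((H : ℤ) ≤ walk ξ t' ω ∨ walk ξ t' ω = 0)} with hS
  have hne : S.Nonempty := by
    by_contra hcon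
    rw [Set.not_nonempty_iff_eq_empty] at hcon
    have : t = 0 := by rw [htdef, hitTime, ← hS, hcon, Nat.sInf_empty]
    omega
  have htS : t ∈ S := Nat.sInf_mem hne
  have htinf : sInf S = t := rfl
  have hmin : ∀ u, 1 ≤ u → u ≤ t - 1 → walk ξ u ω < H ∧ walk ξ u ω ≠ 0 := by
    intro u h1 h2
    have : u ∉ S := Nat.notMem_of_lt_sInf (by omega)
    rw [hS] at this
    simp only [Set.mem_setOf_eq, not_and, not_or] at this
    obtain ⟨ha, hb⟩ := this h1
    rw [not_le] at ha
    exact ⟨ha, hb⟩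
  have hposw : ∀ u, u ≤ t - 1 → 0 < walk ξ u ω := by
    intro u
    induction u with
    | zero => intro _; rw [walk_zero]; omega
    | succ v ih =>
      intro hv
      have h0 := ih (by omega)
      have hstep := walk_succ ξ v ω
      have hnz := (hmin (v+1) (by omega) hv).2
      have hcast : (0:ℤ) ≤ (ξ (v+1) ω : ℤ) := Int.natCast_nonneg _
      omega
  -- build the history
  set h : ℕ →₀ ℕ := Finsupp.onFinset (Finset.Icc 1 (t-1))
    (fun i => if i ∈ Finset.Icc 1 (t-1) then ξ i ω else 0)
    (fun i hi => by by_contra h'; simp [h'] at hi) with hhdef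
  have hpre : ∀ j ∈ Finset.Icc 1 (t-1), ξ j ω = h j := by
    intro j hj
    rw [hhdef, Finsupp.onFinset_apply, if_pos hj]
  have hout : ∀ i, i ∉ Finset.Icc 1 (t-1) → h i = 0 := by
    intro i hi
    rw [hhdef, Finsupp.onFinset_apply, if_neg hi]
  have hmidh : ∀ u, 1 ≤ u → u ≤ t - 1 → 0 < histWalk h u ∧ histWalk h u < H := by
    intro u h1 h2
    rw [← walk_agree ξ hpre h2]
    exact ⟨hposw u h2, (hmin u h1 h2).1⟩
  have hw_eq : walk ξ (t-1) ω = histWalk h (t-1) := walk_agree ξ hpre le_rfl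
  have hw_le : histWalk h (t-1) ≤ H := by
    rcases Nat.eq_or_lt_of_le ht0 with h' | h'
    · have h0 : t - 1 = 0 := by omega
      rw [← hw_eq, h0, walk_zero]
      exact_mod_cast hH
    · exact le_of_lt (hmidh (t-1) (by omega) le_rfl).2
  have hmZ : (ovM H t h : ℤ) = (H:ℤ) + 1 - histWalk h (t-1) := by
    rw [ovM, Int.toNat_of_nonneg (by omega)]
  have hwt : walk ξ t ω = histWalk h (t-1) + ((ξ t ω : ℤ) - 1) := by
    have ht : t - 1 + 1 = t := by omega
    rw [← ht, walk_succ, walk_agree ξ hpre le_rfl, ht]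
  have hge : ovM H t h + k ≤ ξ t ω := by
    have : ((ovM H t h : ℤ) + k) ≤ (ξ t ω : ℤ) := by
      rw [hmZ]
      rw [hwt] at hk
      omega
    exact_mod_cast this
  exact ⟨(t, h), ⟨⟨hΞω, ht0, hout, hmidh⟩, hpre, hge⟩⟩

end walklemmas

lemma natMeasurableSet (s : Set ℕ) : MeasurableSet s := (Set.to_countable s).measurableSet

lemma binomialMeasure_tail {p : ℝ} (hp0 : 0 ≤ p) (hp1 : p ≤ 1) (n k : ℕ) :
    binomialMeasure n p {m | k ≤ m} = ENNReal.ofReal (binTail p n k) := by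
  rw [binomialMeasure, Measure.sum_apply _ (natMeasurableSet _)]
  have hterm : ∀ j : ℕ,
      ((ENNReal.ofReal ((n.choose j : ℝ) * p ^ j * (1 - p) ^ (n - j))) • Measure.dirac j)
        {m | k ≤ m}
      = if j ∈ Finset.Ico k (n+1) then
          ENNReal.ofReal ((n.choose j : ℝ) * p ^ j * (1 - p) ^ (n - j)) else 0 := by
    intro j
    rw [Measure.smul_apply, Measure.dirac_apply' _ (natMeasurableSet _)]
    by_cases hj : k ≤ j
    · by_cases hjn : j < n + 1
      · simp [Set.indicator, hj, Finset.mem_Ico, hjn]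
      · have : n.choose j = 0 := Nat.choose_eq_zero_of_lt (by omega)
        simp [Set.indicator, hj, Finset.mem_Ico, hjn, this]
    · simp [Set.indicator, hj, Finset.mem_Ico]
  rw [tsum_congr hterm]
  rw [tsum_eq_sum (s := Finset.Ico k (n+1)) (by intro j hj; simp [hj])]
  rw [binTail, ENNReal.ofReal_sum_of_nonneg (fun i _ => by
    have h1 : (0:ℝ) ≤ 1 - p := by linarith
    positivity)]
  apply Finset.sum_congr rfl
  intro j hj
  simp [hj]

section measurelemmas
variable {Ω : Type*} [MeasurableSpace Ω] {μ : Measure Ω}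

lemma piece_eq_inter {ξ : ℕ → Ω → ℕ} {Ξ : Set ℕ} {H k t : ℕ} {h : ℕ →₀ ℕ}
    (hok : OvOk Ξ H t h) :
    piece ξ Ξ H k (t, h) =
      (⋂ j ∈ Finset.Icc 1 (t-1), ξ j ⁻¹' {h j}) ∩ ξ t ⁻¹' {x | ovM H t h + k ≤ x} := by
  ext ω
  simp only [piece, Set.mem_setOf_eq, Set.mem_inter_iff, Set.mem_iInter, Set.mem_preimage,
    Set.mem_singleton_iff]
  constructor
  · rintro ⟨_, h1, h2⟩; exact ⟨h1, h2⟩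
  · rintro ⟨h1, h2⟩; exact ⟨hok, h1, h2⟩

lemma piece_empty {ξ : ℕ → Ω → ℕ} {Ξ : Set ℕ} {H k t : ℕ} {h : ℕ →₀ ℕ}
    (hok : ¬ OvOk Ξ H t h) : piece ξ Ξ H k (t, h) = ∅ := by
  ext ω; simp [piece, hok]

lemma piece_measurable {ξ : ℕ → Ω → ℕ} (hmeas : ∀ i, Measurable (ξ i))
    (Ξ : Set ℕ) (H k : ℕ) (i : ℕ × (ℕ →₀ ℕ)) : MeasurableSet (piece ξ Ξ H k i) := by
  obtain ⟨t, h⟩ := i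
  by_cases hok : OvOk Ξ H t h
  · rw [piece_eq_inter hok]
    exact (MeasurableSet.biInter (Finset.Icc 1 (t-1)).countable_toSet
      (fun j _ => (hmeas j) (natMeasurableSet _))).inter ((hmeas t) (natMeasurableSet _))
  · rw [piece_empty hok]; exact MeasurableSet.empty

lemma piece_disjoint (ξ : ℕ → Ω → ℕ) {Ξ : Set ℕ} {H : ℕ} (hH : 0 < H) :
    Pairwise (Function.onFun Disjoint (piece ξ Ξ H 0)) := by
  intro i i' hne
  rw [Function.onFun, Set.disjoint_left]
  intro ω hω hω'
  apply hne
  have s1 := piece_spec ξ hH hω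
  have s2 := piece_spec ξ hH hω'
  have ht : i.1 = i'.1 := by rw [← s1.1, ← s2.1]
  obtain ⟨⟨_, _, hout, _⟩, hpre, _⟩ := hω
  obtain ⟨⟨_, _, hout', _⟩, hpre', _⟩ := hω'
  have hh : i.2 = i'.2 := by
    ext j
    by_cases hj : j ∈ Finset.Icc 1 (i.1 - 1)
    · rw [← hpre j hj, hpre' j (by rw [← ht]; exact hj)]
    · rw [hout j hj, hout' j (by rw [← ht]; exact hj)]
  exact Prod.ext ht hh

lemma piece_measure {n : ℕ} {p : ℝ} {ξ : ℕ → Ω → ℕ} (hmeas : ∀ i, Measurable (ξ i))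
    (hdist : ∀ i, μ.map (ξ i) = binomialMeasure n p)
    (hindep : ProbabilityTheory.iIndepFun ξ μ)
    (hp0 : 0 ≤ p) (hp1 : p ≤ 1)
    {Ξ : Set ℕ} {H t : ℕ} {h : ℕ →₀ ℕ} (k : ℕ) (hok : OvOk Ξ H t h) :
    μ (piece ξ Ξ H k (t, h)) =
      ENNReal.ofReal (binTail p n (ovM H t h + k)) *
        μ (⋂ j ∈ Finset.Icc 1 (t-1), ξ j ⁻¹' {(h j : ℕ)}) := by
  classical
  have htnot : t ∉ Finset.Icc 1 (t-1) := by
    rw [Finset.mem_Icc]; omega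
  set A : ℕ → Set ℕ := fun j => if j = t then {x | ovM H t h + k ≤ x} else {h j} with hA
  have hsets : ∀ j ∈ insert t (Finset.Icc 1 (t-1)),
      MeasurableSet[(inferInstance : MeasurableSpace ℕ).comap (ξ j)] (ξ j ⁻¹' A j) :=
    fun j _ => ⟨A j, natMeasurableSet _, rfl⟩
  have hprod := hindep.meas_biInter (S := insert t (Finset.Icc 1 (t-1)))
      (s := fun j => ξ j ⁻¹' A j) hsets
  have hsets2 : ∀ j ∈ Finset.Icc 1 (t-1),
      MeasurableSet[(inferInstance : MeasurableSpace ℕ).comap (ξ j)] (ξ j ⁻¹' A j) :=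
    fun j _ => ⟨A j, natMeasurableSet _, rfl⟩
  have hprod2 := hindep.meas_biInter (S := Finset.Icc 1 (t-1))
      (s := fun j => ξ j ⁻¹' A j) hsets2
  have hDeq : (⋂ j ∈ Finset.Icc 1 (t-1), ξ j ⁻¹' {(h j : ℕ)})
      = ⋂ j ∈ Finset.Icc 1 (t-1), ξ j ⁻¹' A j := by
    apply Set.iInter₂_congr
    intro j hj
    have hjt : j ≠ t := fun hjt => htnot (hjt ▸ hj)
    rw [hA]
    simp only [if_neg hjt]
  have hPieq : piece ξ Ξ H k (t, h) = ⋂ j ∈ insert t (Finset.Icc 1 (t-1)), ξ j ⁻¹' A j := by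
    rw [piece_eq_inter hok, Finset.set_biInter_insert, ← hDeq]
    rw [show A t = {x | ovM H t h + k ≤ x} from if_pos rfl]
    rw [Set.inter_comm]
  have hAt : μ (ξ t ⁻¹' A t) = ENNReal.ofReal (binTail p n (ovM H t h + k)) := by
    rw [show A t = {x | ovM H t h + k ≤ x} from if_pos rfl]
    rw [← Measure.map_apply (hmeas t) (natMeasurableSet _), hdist t]
    exact binomialMeasure_tail hp0 hp1 n _
  rw [hPieq, hprod, Finset.prod_insert htnot, ← hprod2, hAt, hDeq]

end measurelemmas


/-- **Lemma 5, Nachmias–Peres.** Given `{S_γ ≥ H, γ ∈ Ξ}`, the overshoot `S_γ - H` is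
stochastically dominated by the Binomial(n,p) distribution. -/
theorem overshoot_dominated {Ω : Type*} [MeasurableSpace Ω] (μ : Measure Ω)
    [IsProbabilityMeasure μ] (n : ℕ) (hn : 0 < n) (p : ℝ) (hp0 : 0 < p) (hp1 : p < 1)
    (ξ : ℕ → Ω → ℕ) (hmeas : ∀ i, Measurable (ξ i))
    (hdist : ∀ i, μ.map (ξ i) = binomialMeasure n p)
    (hindep : iIndepFun ξ μ)
    (H : ℕ) (hH : 0 < H) (Ξ : Set ℕ) (hΞ : ∀ t ∈ Ξ, 0 < t)
    (hpos : 0 < μ {ω | (H : ℤ) ≤ walk ξ (hitTime ξ H ω) ω ∧ hitTime ξ H ω ∈ Ξ})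
    (k : ℕ) :
    (μ[|{ω | (H : ℤ) ≤ walk ξ (hitTime ξ H ω) ω ∧ hitTime ξ H ω ∈ Ξ}])
        {ω | (k : ℤ) ≤ walk ξ (hitTime ξ H ω) ω - H} ≤
      binomialMeasure n p {m | k ≤ m} := by
  have hp0' : (0:ℝ) ≤ p := le_of_lt hp0
  have hp1' : p ≤ 1 := le_of_lt hp1
  set E := {ω | (H : ℤ) ≤ walk ξ (hitTime ξ H ω) ω ∧ hitTime ξ H ω ∈ Ξ} with hE
  set G := {ω | (k : ℤ) ≤ walk ξ (hitTime ξ H ω) ω - H} with hG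
  have hEdec : E = ⋃ i, piece ξ Ξ H 0 i := by
    ext ω
    simp only [hE, Set.mem_setOf_eq, Set.mem_iUnion]
    constructor
    · rintro ⟨h1, h2⟩
      exact mem_piece ξ hH hΞ h2 (by push_cast; omega)
    · rintro ⟨i, hi⟩
      have hs := piece_spec ξ hH hi
      rw [hs.1]
      refine ⟨?_, hs.2.2⟩
      have h21 := hs.2.1
      push_cast at h21
      omega
  have hEmeas : MeasurableSet E := by
    rw [hEdec]
    exact MeasurableSet.iUnion (fun i => piece_measurable hmeas _ _ _ i)
  have hμE : μ E = ∑' i, μ (piece ξ Ξ H 0 i) := by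
    rw [hEdec, measure_iUnion (piece_disjoint ξ hH) (fun i => piece_measurable hmeas _ _ _ i)]
  have hcover : E ∩ G ⊆ ⋃ i, piece ξ Ξ H k i := by
    rintro ω ⟨⟨h1, h2⟩, h3⟩
    rw [hG, Set.mem_setOf_eq] at h3
    rcases mem_piece ξ (k := k) hH hΞ h2 (by omega) with ⟨i, hi⟩
    exact Set.mem_iUnion.mpr ⟨i, hi⟩
  have hbound : ∀ i, μ (piece ξ Ξ H k i) ≤
      ENNReal.ofReal (binTail p n k) * μ (piece ξ Ξ H 0 i) := by
    rintro ⟨t, h⟩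
    by_cases hok : OvOk Ξ H t h
    · rw [piece_measure hmeas hdist hindep hp0' hp1' k hok,
        piece_measure hmeas hdist hindep hp0' hp1' 0 hok, ← mul_assoc]
      apply mul_le_mul_left
      rw [Nat.add_zero]
      calc ENNReal.ofReal (binTail p n (ovM H t h + k))
          ≤ ENNReal.ofReal (binTail p n (ovM H t h) * binTail p n k) :=
            ENNReal.ofReal_le_ofReal (binTail_nbu hp0' hp1' n _ k)
        _ = ENNReal.ofReal (binTail p n k) * ENNReal.ofReal (binTail p n (ovM H t h)) := by
            rw [ENNReal.ofReal_mul (binTail_nonneg hp0' hp1' n _), mul_comm]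
    · rw [piece_empty hok, piece_empty hok]
      simp
  have hle : μ (E ∩ G) ≤ ENNReal.ofReal (binTail p n k) * μ E := by
    calc μ (E ∩ G) ≤ μ (⋃ i, piece ξ Ξ H k i) := measure_mono hcover
      _ ≤ ∑' i, μ (piece ξ Ξ H k i) := measure_iUnion_le _
      _ ≤ ∑' i, ENNReal.ofReal (binTail p n k) * μ (piece ξ Ξ H 0 i) :=
          ENNReal.tsum_le_tsum hbound
      _ = ENNReal.ofReal (binTail p n k) * ∑' i, μ (piece ξ Ξ H 0 i) :=
          ENNReal.tsum_mul_left
      _ = ENNReal.ofReal (binTail p n k) * μ E := by rw [hμE]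
  have hne : μ E ≠ 0 := ne_of_gt hpos
  rw [cond_apply hEmeas]
  calc (μ E)⁻¹ * μ (E ∩ G) ≤ (μ E)⁻¹ * (ENNReal.ofReal (binTail p n k) * μ E) :=
        mul_le_mul_right hle _
    _ = ENNReal.ofReal (binTail p n k) * ((μ E)⁻¹ * μ E) := by ring
    _ = ENNReal.ofReal (binTail p n k) := by
        rw [ENNReal.inv_mul_cancel hne (measure_ne_top μ E), mul_one]
    _ = binomialMeasure n p {m | k ≤ m} := (binomialMeasure_tail hp0' hp1' n k).symm
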